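/- Fix a finite set {1,…,n} and X ⊆ ℝⁿ. Let T = {J ⊆ {1,…,n} : the partition {J, Jᶜ} induces a factorization of X}, i.e. X = {x : P_J(x) ∈ P_J(X), P_{Jᶜ}(x) ∈ P_{Jᶜ}(X)}. Then T contains {1,…,n}, is closed under complement, and is closed under intersection (hence also under union); in particular T is a topology on {1,…,n}. -/
import Mathlib


/-- `J` together with its complement induces a factorization of `X`:
`X = {x : P_J(x) ∈ P_J(X), P_{Jᶜ}(x) ∈ P_{Jᶜ}(X)}`. -/
def Factorizes (n : ℕ) (X : Set (Fin n → ℝ)) (J : Set (Fin n)) : Prop :=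
  X = {x | (∃ y ∈ X, ∀ i ∈ J, x i = y i) ∧ (∃ y ∈ X, ∀ i ∉ J, x i = y i)}

/-- the collection `T = {J : {J,Jᶜ} induces a factorization of X}` contains
`{1,…,n}`, is closed under complement, intersection and union — hence it is a topology
on `{1,…,n}`. -/
theorem factorizing_sets_form_topology (n : ℕ) (X : Set (Fin n → ℝ)) :
    Factorizes n X Set.univ ∧
    (∀ J, Factorizes n X J → Factorizes n X Jᶜ) ∧
    (∀ J K, Factorizes n X J → Factorizes n X K → Factorizes n X (J ∩ K)) ∧
    (∀ J K, Factorizes n X J → Factorizes n X K → Factorizes n X (J ∪ K)) := by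
  have hself : ∀ (J : Set (Fin n)) (x : Fin n → ℝ), x ∈ X →
      x ∈ {x | (∃ y ∈ X, ∀ i ∈ J, x i = y i) ∧ (∃ y ∈ X, ∀ i ∉ J, x i = y i)} :=
    fun J x hx => ⟨⟨x, hx, fun _ _ => rfl⟩, ⟨x, hx, fun _ _ => rfl⟩⟩
  have hcompl : ∀ J, Factorizes n X J → Factorizes n X Jᶜ := by
    intro J hJ
    ext x
    constructor
    · exact hself Jᶜ x
    · rintro ⟨⟨y, hy, hy'⟩, ⟨z, hz, hz'⟩⟩
      rw [hJ]
      exact ⟨⟨z, hz, fun i hi => hz' i (by simpa using hi)⟩,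
             ⟨y, hy, fun i hi => hy' i (by simpa using hi)⟩⟩
  have hinter : ∀ J K, Factorizes n X J → Factorizes n X K → Factorizes n X (J ∩ K) := by
    intro J K hJ hK
    classical
    ext x
    constructor
    · exact hself _ x
    · rintro ⟨⟨y, hy, hy'⟩, ⟨z, hz, hz'⟩⟩
      set w : Fin n → ℝ := fun i => if i ∈ K then y i else z i with hw
      have hwX : w ∈ X := by
        rw [hK]
        exact ⟨⟨y, hy, fun i hi => by simp [hw, hi]⟩, ⟨z, hz, fun i hi => by simp [hw, hi]⟩⟩
      rw [hJ]
      refine ⟨⟨w, hwX, fun i hi => ?_⟩, ⟨z, hz, fun i hi => hz' i (fun h => hi h.1)⟩⟩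
      by_cases hiK : i ∈ K
      · simpa [hw, hiK] using hy' i ⟨hi, hiK⟩
      · simpa [hw, hiK] using hz' i (fun h => hiK h.2)
  refine ⟨?_, hcompl, hinter, ?_⟩
  · ext x
    constructor
    · exact hself _ x
    · rintro ⟨⟨y, hy, hy'⟩, -⟩
      have hxy : x = y := funext fun i => hy' i (Set.mem_univ i)
      rw [hxy]; exact hy
  · intro J K hJ hK
    have h := hcompl _ (hinter _ _ (hcompl J hJ) (hcompl K hK))
    simpa [Set.compl_inter, compl_compl] using h
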